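/- For all integers n ≥ 1 and d ≥ 1, b(d)·∑_{k=0}^{n−1} n!/k! = ∑_{k=0}^{n−1} k^d·(n!/k!) + ∑_{j=1}^{d} B_{d,j}·n^j. -/

import Mathlib

/-- The Bell numbers: `bell 0 = 1` and `bell (d+1) = ∑_{j=0}^{d} C(d,j) * bell j`. -/
def bell : ℕ → ℕ
  | 0 => 1
  | d + 1 => ∑ j ∈ (Finset.range (d + 1)).attach, Nat.choose d j.1 * bell j.1
  decreasing_by exact Finset.mem_range.mp j.2

/-- The doubly-indexed integers `B d j`: `B d j = 0` for `d < j`, `B j j = 1`, and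
`B (d+1) j = ∑_{k=j}^{d} C(d,k) * B k j` for `d ≥ j`. -/
def Bmat : ℕ → ℕ → ℕ
  | 0, j => if 0 = j then 1 else 0
  | d + 1, j =>
    if d + 1 < j then 0
    else if d + 1 = j then 1
    else ∑ k ∈ (Finset.Icc j d).attach, Nat.choose d k.1 * Bmat k.1 j
  decreasing_by
    have := (Finset.mem_Icc.mp k.2).2; omega

open Finset

noncomputable def Sq (n : ℕ) : ℚ := ∑ k ∈ range n, (n.factorial : ℚ) / (k.factorial : ℚ)

noncomputable def Tq (d n : ℕ) : ℚ :=
  ∑ k ∈ range n, (k : ℚ) ^ d * ((n.factorial : ℚ) / (k.factorial : ℚ))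

noncomputable def Pq (d n : ℕ) : ℚ := ∑ j ∈ Icc 1 d, (Bmat d j : ℚ) * (n : ℚ) ^ j

lemma Tq_zero (n : ℕ) : Tq 0 n = Sq n := by
  simp [Tq, Sq]

lemma bell_succ (e : ℕ) :
    (bell (e + 1) : ℚ) = ∑ k ∈ range (e + 1), (Nat.choose e k : ℚ) * (bell k : ℚ) := by
  rw [bell]
  push_cast
  rw [Finset.sum_attach (range (e + 1)) (fun k => (Nat.choose e k : ℚ) * (bell k : ℚ))]

lemma Bmat_succ (e j : ℕ) (h1 : 1 ≤ j) (h2 : j ≤ e) :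
    (Bmat (e + 1) j : ℚ) = ∑ k ∈ Icc j e, (Nat.choose e k : ℚ) * (Bmat k j : ℚ) := by
  rw [Bmat]
  rw [if_neg (by omega), if_neg (by omega)]
  push_cast
  rw [Finset.sum_attach (Icc j e) (fun k => (Nat.choose e k : ℚ) * (Bmat k j : ℚ))]

lemma Bmat_diag (e : ℕ) : Bmat (e + 1) (e + 1) = 1 := by
  rw [Bmat]; simp

lemma key (d n : ℕ) :
    (∑ j ∈ range (d + 1), (Nat.choose d j : ℚ) * Tq j n) = Tq (d + 1) n + (n : ℚ) ^ (d + 1) := by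
  have h1 : ∀ k : ℕ,
      ((k : ℚ) + 1) ^ (d + 1) * ((n.factorial : ℚ) / ((k + 1).factorial : ℚ))
        = ((k : ℚ) + 1) ^ d * ((n.factorial : ℚ) / (k.factorial : ℚ)) := by
    intro k
    have hk : (((k + 1).factorial : ℕ) : ℚ) = ((k : ℚ) + 1) * (k.factorial : ℚ) := by
      rw [Nat.factorial_succ]; push_cast; ring
    have h0 : (k.factorial : ℚ) ≠ 0 := Nat.cast_ne_zero.mpr k.factorial_ne_zero
    have h0' : ((k : ℚ) + 1) ≠ 0 := by positivity
    rw [hk]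
    field_simp
    ring
  calc ∑ j ∈ range (d + 1), (Nat.choose d j : ℚ) * Tq j n
      = ∑ k ∈ range n, (∑ j ∈ range (d + 1), ((k : ℚ)) ^ j * (Nat.choose d j : ℚ))
          * ((n.factorial : ℚ) / (k.factorial : ℚ)) := by
        simp only [Tq, Finset.mul_sum]
        rw [Finset.sum_comm]
        refine Finset.sum_congr rfl fun k _ => ?_
        rw [Finset.sum_mul]
        refine Finset.sum_congr rfl fun j _ => ?_
        ring
    _ = ∑ k ∈ range n, ((k : ℚ) + 1) ^ d * ((n.factorial : ℚ) / (k.factorial : ℚ)) := by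
        refine Finset.sum_congr rfl fun k _ => ?_
        rw [add_pow]
        simp
    _ = ∑ k ∈ range n,
          (((k + 1 : ℕ) : ℚ)) ^ (d + 1) * ((n.factorial : ℚ) / ((k + 1).factorial : ℚ)) := by
        refine Finset.sum_congr rfl fun k _ => ?_
        push_cast
        rw [h1 k]
    _ = ∑ k ∈ range (n + 1), ((k : ℚ)) ^ (d + 1) * ((n.factorial : ℚ) / (k.factorial : ℚ)) := by
        rw [Finset.sum_range_succ']
        simp
    _ = Tq (d + 1) n + (n : ℚ) ^ (d + 1) := by
        rw [Finset.sum_range_succ, Tq]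
        have : (n.factorial : ℚ) ≠ 0 := Nat.cast_ne_zero.mpr n.factorial_ne_zero
        field_simp
        congr 1
        refine Finset.sum_congr rfl fun k _ => ?_
        ring

lemma sum_range_split (e : ℕ) (f : ℕ → ℚ) :
    ∑ k ∈ range (e + 1), f k = f 0 + ∑ k ∈ Icc 1 e, f k := by
  rw [← Finset.Ico_add_one_right_eq_Icc, Finset.range_eq_Ico,
    ← Finset.sum_Ico_consecutive f (Nat.zero_le 1) (by omega : 1 ≤ e + 1)]
  simp

lemma Pq_succ (e n : ℕ) :
    Pq (e + 1) n = (∑ k ∈ Icc 1 e, (Nat.choose e k : ℚ) * Pq k n) + (n : ℚ) ^ (e + 1) := by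
  have hswap : (∑ k ∈ Icc 1 e, (Nat.choose e k : ℚ) * Pq k n)
      = ∑ j ∈ Icc 1 e, ∑ k ∈ Icc j e, ((Nat.choose e k : ℚ) * (Bmat k j : ℚ)) * (n : ℚ) ^ j := by
    rw [← Finset.sum_comm' (s := Icc 1 e) (t := fun k => Icc 1 k) (t' := Icc 1 e)
      (s' := fun j => Icc j e) (by intro k j; simp only [Finset.mem_Icc]; omega)]
    refine Finset.sum_congr rfl fun k _ => ?_
    simp only [Pq, Finset.mul_sum]
    exact Finset.sum_congr rfl fun j _ => by ring
  have htop : ((Bmat (e + 1) (e + 1) : ℚ)) * (n : ℚ) ^ (e + 1) = (n : ℚ) ^ (e + 1) := by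
    rw [Bmat_diag]; simp
  rw [hswap]
  show ∑ j ∈ Icc 1 (e + 1), (Bmat (e + 1) j : ℚ) * (n : ℚ) ^ j = _
  rw [Finset.sum_Icc_succ_top (by omega : 1 ≤ e + 1), htop]
  congr 1
  refine Finset.sum_congr rfl fun j hj => ?_
  rw [Bmat_succ e j (Finset.mem_Icc.mp hj).1 (Finset.mem_Icc.mp hj).2, Finset.sum_mul]

theorem stmt_16 (n : ℕ) (hn : 1 ≤ n) (d : ℕ) (hd : 1 ≤ d) :
    (bell d : ℚ) * ∑ k ∈ Finset.range n, ((Nat.factorial n : ℚ) / (Nat.factorial k : ℚ)) =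
      (∑ k ∈ Finset.range n, (k : ℚ) ^ d * ((Nat.factorial n : ℚ) / (Nat.factorial k : ℚ))) +
        ∑ j ∈ Finset.Icc 1 d, (Bmat d j : ℚ) * (n : ℚ) ^ j := by
  induction d using Nat.strong_induction_on with
  | _ d ih =>
    obtain ⟨e, rfl⟩ : ∃ e, d = e + 1 := ⟨d - 1, by omega⟩
    show (bell (e + 1) : ℚ) * Sq n = Tq (e + 1) n + Pq (e + 1) n
    have hkey := key e n
    have hP := Pq_succ e n
    have hIH : ∀ k ∈ Icc 1 e, (Nat.choose e k : ℚ) * (bell k : ℚ) * Sq n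
        = (Nat.choose e k : ℚ) * Tq k n + (Nat.choose e k : ℚ) * Pq k n := by
      intro k hk
      obtain ⟨hk1, hk2⟩ := Finset.mem_Icc.mp hk
      have h : (bell k : ℚ) * Sq n = Tq k n + Pq k n := ih k (by omega) hk1
      rw [mul_assoc, h]; ring
    rw [bell_succ, Finset.sum_mul, sum_range_split e (fun k => (Nat.choose e k : ℚ) * (bell k : ℚ) * Sq n)]
    have hT : Tq (e + 1) n
        = (Nat.choose e 0 : ℚ) * Tq 0 n + (∑ k ∈ Icc 1 e, (Nat.choose e k : ℚ) * Tq k n)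
            - (n : ℚ) ^ (e + 1) := by
      rw [← sum_range_split e (fun k => (Nat.choose e k : ℚ) * Tq k n), hkey]; ring
    rw [hT, hP]
    have : ∑ k ∈ Icc 1 e, (Nat.choose e k : ℚ) * (bell k : ℚ) * Sq n
        = ∑ k ∈ Icc 1 e, ((Nat.choose e k : ℚ) * Tq k n + (Nat.choose e k : ℚ) * Pq k n) :=
      Finset.sum_congr rfl hIH
    rw [this, Finset.sum_add_distrib]
    simp [bell, Tq_zero]
    ring
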